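/- Let M ≥ 1 and let a_0, …, a_{M−1} and b_0, …, b_{M−1} be natural numbers such that p_i := a_i + b_i + 1 is prime for every i, with p_0 < p_1 < … < p_{M−1}, and such that for all indices 0 ≤ i, j, k ≤ M−1, if a_j + b_k + 1 = p_i then i = j = k. Then for every choice of signs s : {0,…,M−1} × {0,…,M−1} → {−1, +1}, the M×M real matrix with (i, j) entry s(i, j) · √(a_i + b_j + 1) has rank M over ℝ; equivalently, its determinant is nonzero. -/

import Mathlib

open Finset Polynomial IntermediateField


private lemma sqrt_nat_prod {ι : Type*} (u : Finset ι) (c : ι → ℕ) :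
    Real.sqrt ((∏ i ∈ u, c i : ℕ) : ℝ) = ∏ i ∈ u, Real.sqrt (c i) := by
  classical
  induction u using Finset.induction_on with
  | empty => simp
  | insert _ _ ha ih =>
    rw [Finset.prod_insert ha, Finset.prod_insert ha, ← ih]
    push_cast
    rw [Real.sqrt_mul (by positivity)]

private lemma eq_of_squarefree_of_isSquare_mul {d e : ℕ} (hd : Squarefree d) (he : Squarefree e)
    (h : IsSquare (d * e)) : d = e := by
  refine Nat.eq_of_factorization_eq hd.ne_zero he.ne_zero fun p => ?_
  obtain ⟨r, hr⟩ := h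
  have hr0 : r ≠ 0 := by
    rintro rfl
    rw [mul_zero] at hr
    exact (Nat.mul_ne_zero hd.ne_zero he.ne_zero) hr
  have heven : (d * e).factorization p = r.factorization p + r.factorization p := by
    rw [hr, Nat.factorization_mul hr0 hr0]; rfl
  rw [Nat.factorization_mul hd.ne_zero he.ne_zero] at heven
  have h1 := (Nat.squarefree_iff_factorization_le_one hd.ne_zero).mp hd p
  have h2 := (Nat.squarefree_iff_factorization_le_one he.ne_zero).mp he p
  simp only [Finsupp.add_apply] at heven
  omega

private lemma trace_eq_zero_of_sq_cast {F K : Type*} [Field F] [Field K] [Algebra F K]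
    [FiniteDimensional F K] (x : K) (c : F) (hx : x * x = algebraMap F K c)
    (hirr : x ∉ (algebraMap F K).range) : Algebra.trace F K x = 0 := by
  have haev : (Polynomial.aeval x) (X ^ 2 - C c) = 0 := by
    simp [sq, hx]
  have hint : IsIntegral F x := ⟨X ^ 2 - C c, monic_X_pow_sub_C c two_ne_zero, haev⟩
  have hmin : minpoly F x = X ^ 2 - C c := by
    have hq : (X ^ 2 - C c : F[X]).Monic := monic_X_pow_sub_C c two_ne_zero
    have hdvd : minpoly F x ∣ X ^ 2 - C c := minpoly.dvd F x haev
    have hdeg2 : (X ^ 2 - C c : F[X]).natDegree = 2 := by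
      simpa using Polynomial.natDegree_X_pow_sub_C (n := 2) (a := c)
    have h2 : 2 ≤ (minpoly F x).natDegree := (minpoly.two_le_natDegree_iff hint).mpr hirr
    have hle : (minpoly F x).natDegree ≤ 2 :=
      hdeg2 ▸ Polynomial.natDegree_le_of_dvd hdvd hq.ne_zero
    obtain ⟨k, hk⟩ := hdvd
    have hm : (minpoly F x).Monic := minpoly.monic hint
    have hk0 : k ≠ 0 := by
      rintro rfl; rw [mul_zero] at hk; exact hq.ne_zero hk
    have hdegk : k.natDegree = 0 := by
      have := Polynomial.natDegree_mul hm.ne_zero hk0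
      rw [← hk, hdeg2] at this
      omega
    have hkl : k = C (k.coeff 0) := Polynomial.eq_C_of_natDegree_eq_zero hdegk
    have hlead : k.coeff 0 = 1 := by
      have := congrArg Polynomial.leadingCoeff hk
      rw [Polynomial.leadingCoeff_mul, hm.leadingCoeff, hq.leadingCoeff, one_mul] at this
      rw [hkl] at this
      simpa using this.symm
    rw [hk, hkl, hlead, map_one, mul_one]
  have hnc : (minpoly F x).nextCoeff = 0 := by
    rw [hmin]
    rw [Polynomial.nextCoeff_of_natDegree_pos (by
      simpa using Polynomial.natDegree_X_pow_sub_C (n := 2) (a := c) ▸ two_pos)]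
    · simp [Polynomial.natDegree_X_pow_sub_C, Polynomial.coeff_X_pow]
  haveI : FiniteDimensional F F⟮x⟯ := IntermediateField.adjoin.finiteDimensional hint
  haveI : FiniteDimensional F⟮x⟯ K := FiniteDimensional.right F F⟮x⟯ K
  have hgen : Algebra.trace F F⟮x⟯ (AdjoinSimple.gen F x) = 0 := by
    have h1 := PowerBasis.trace_gen_eq_nextCoeff_minpoly (IntermediateField.adjoin.powerBasis hint)
    have h2 : (IntermediateField.adjoin.powerBasis hint).gen = AdjoinSimple.gen F x := rfl
    rw [h2, IntermediateField.minpoly_gen F x, hnc, neg_zero] at h1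
    exact h1
  have hxmap : algebraMap F⟮x⟯ K (AdjoinSimple.gen F x) = x :=
    IntermediateField.AdjoinSimple.algebraMap_gen F x
  calc Algebra.trace F K x
      = Algebra.trace F K (algebraMap F⟮x⟯ K (AdjoinSimple.gen F x)) := by rw [hxmap]
    _ = Algebra.trace F F⟮x⟯
          (Algebra.trace F⟮x⟯ K (algebraMap F⟮x⟯ K (AdjoinSimple.gen F x))) :=
        (Algebra.trace_trace _).symm
    _ = 0 := by rw [Algebra.trace_algebraMap, map_nsmul, hgen, smul_zero]

private lemma sqrt_squarefree_linIndep (S : Finset ℕ) (hS : ∀ d ∈ S, Squarefree d)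
    (f : ℕ → ℚ) (hsum : ∑ d ∈ S, (f d : ℝ) * Real.sqrt d = 0) :
    ∀ d₀ ∈ S, f d₀ = 0 := by
  classical
  intro d₀ hd₀
  set s : Set ℝ := (fun d : ℕ => Real.sqrt d) '' (S : Set ℕ) with hs
  haveI : Finite s := (S.finite_toSet.image _).to_subtype
  have hint : ∀ y ∈ s, IsIntegral ℚ y := by
    rintro y ⟨d, _, rfl⟩
    refine ⟨X ^ 2 - C (d : ℚ), monic_X_pow_sub_C _ two_ne_zero, ?_⟩
    have : Real.sqrt d ^ 2 = (d : ℝ) := Real.sq_sqrt (Nat.cast_nonneg d)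
    simp [this]
  haveI hFD : FiniteDimensional ℚ (IntermediateField.adjoin ℚ s) :=
    IntermediateField.finiteDimensional_adjoin hint
  set K := IntermediateField.adjoin ℚ s with hK
  have hmem : ∀ d ∈ S, Real.sqrt d ∈ K := fun d hd =>
    IntermediateField.subset_adjoin ℚ s ⟨d, hd, rfl⟩
  set x : ℕ → K := fun d => if hd : d ∈ S then ⟨Real.sqrt d, hmem d hd⟩ else 0 with hx
  have hxcoe : ∀ d ∈ S, (algebraMap K ℝ) (x d) = Real.sqrt d := by
    intro d hd
    simp only [hx, dif_pos hd]
    rfl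
  have hinj := (algebraMap (↥K) ℝ).injective
  have hQ : ∀ q : ℚ, (algebraMap (↥K) ℝ) (algebraMap ℚ (↥K) q) = (q : ℝ) := by
    intro q
    rw [← IsScalarTower.algebraMap_apply]
    exact eq_ratCast _ q
  have hz : ∑ d ∈ S, algebraMap ℚ K (f d) * x d = 0 := by
    apply hinj
    rw [map_sum, map_zero, ← hsum]
    refine Finset.sum_congr rfl fun d hd => ?_
    rw [map_mul, hxcoe d hd, hQ]
  have hz1 : ∑ d ∈ S, algebraMap ℚ K (f d) * (x d * x d₀) = 0 := by
    calc ∑ d ∈ S, algebraMap ℚ K (f d) * (x d * x d₀)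
        = (∑ d ∈ S, algebraMap ℚ K (f d) * x d) * x d₀ := by
          rw [Finset.sum_mul]; exact Finset.sum_congr rfl fun d _ => (mul_assoc _ _ _).symm
      _ = 0 := by rw [hz, zero_mul]
  have hz2 : ∑ d ∈ S, f d * Algebra.trace ℚ K (x d * x d₀) = 0 := by
    have := congrArg (Algebra.trace ℚ (↥K)) hz1
    rw [map_sum, map_zero] at this
    rw [← this]
    refine Finset.sum_congr rfl fun d _ => ?_
    rw [← Algebra.smul_def, map_smul, smul_eq_mul]
  have hmul : ∀ d ∈ S, (x d * x d₀) * (x d * x d₀) = algebraMap ℚ K ((d * d₀ : ℕ) : ℚ) := by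
    intro d hd
    apply hinj
    rw [map_mul, map_mul, hxcoe d hd, hxcoe d₀ hd₀, hQ]
    push_cast
    rw [show Real.sqrt d * Real.sqrt d₀ * (Real.sqrt d * Real.sqrt d₀)
        = (Real.sqrt d * Real.sqrt d) * (Real.sqrt d₀ * Real.sqrt d₀) by ring,
      Real.mul_self_sqrt (Nat.cast_nonneg d), Real.mul_self_sqrt (Nat.cast_nonneg d₀)]
  have htr0 : ∀ d ∈ S, d ≠ d₀ → Algebra.trace ℚ (↥K) (x d * x d₀) = 0 := by
    intro d hd hne
    refine trace_eq_zero_of_sq_cast _ ((d * d₀ : ℕ) : ℚ) (hmul d hd) ?_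
    rintro ⟨q, hq⟩
    have hcoe : (q : ℝ) = Real.sqrt d * Real.sqrt d₀ := by
      have := congrArg (algebraMap (↥K) ℝ) hq
      rwa [hQ, map_mul, hxcoe d hd, hxcoe d₀ hd₀] at this
    have hirr : Irrational (Real.sqrt ((d * d₀ : ℕ) : ℝ)) :=
      irrational_sqrt_natCast_iff.mpr
        (fun hsq => hne (eq_of_squarefree_of_isSquare_mul (hS d hd) (hS d₀ hd₀) hsq))
    refine hirr ⟨q, ?_⟩
    rw [show ((d * d₀ : ℕ) : ℝ) = (d : ℝ) * (d₀ : ℝ) by push_cast; ring,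
      Real.sqrt_mul (Nat.cast_nonneg d)]
    exact hcoe
  have htrd : Algebra.trace ℚ (↥K) (x d₀ * x d₀) = (Module.finrank ℚ (↥K)) • ((d₀ : ℚ)) := by
    have h1 : x d₀ * x d₀ = algebraMap ℚ K ((d₀ : ℕ) : ℚ) := by
      apply hinj
      rw [map_mul, hxcoe d₀ hd₀, hQ, Real.mul_self_sqrt (Nat.cast_nonneg d₀)]
      push_cast
      rfl
    rw [h1, Algebra.trace_algebraMap]
  rw [Finset.sum_eq_single_of_mem d₀ hd₀
    (fun d hd hne => by rw [htr0 d hd hne, mul_zero]), htrd] at hz2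
  have hr : 0 < Module.finrank ℚ (↥K) := Module.finrank_pos
  have hd0 : d₀ ≠ 0 := (hS d₀ hd₀).ne_zero
  have : f d₀ * ((Module.finrank ℚ (↥K) : ℚ) * (d₀ : ℚ)) = 0 := by
    rwa [nsmul_eq_mul] at hz2
  rcases mul_eq_zero.mp this with h | h
  · exact h
  · exfalso
    rcases mul_eq_zero.mp h with h' | h'
    · exact (Nat.cast_ne_zero.mpr hr.ne').elim (by exact_mod_cast h')
    · exact (Nat.cast_ne_zero.mpr hd0).elim (by exact_mod_cast h')

private lemma sum_fiber_sqrt {ι : Type*} [DecidableEq ι] (v : Finset ι) (g : ι → ℚ) (n : ι → ℕ) :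
    ∑ i ∈ v, (g i : ℝ) * Real.sqrt (n i)
      = ∑ m ∈ v.image n, ((∑ i ∈ v.filter (fun i => n i = m), g i : ℚ) : ℝ) * Real.sqrt m := by
  rw [← Finset.sum_fiberwise_of_maps_to (fun i hi => Finset.mem_image_of_mem n hi)
    (fun i => (g i : ℝ) * Real.sqrt (n i))]
  refine Finset.sum_congr rfl fun m _ => ?_
  rw [Rat.cast_sum, Finset.sum_mul]
  refine Finset.sum_congr rfl fun i hi => ?_
  rw [(Finset.mem_filter.mp hi).2]

private lemma sqrt_filter_eq_zero {ι : Type*} [DecidableEq ι] (u : Finset ι) (g : ι → ℚ)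
    (n : ι → ℕ) (hn : ∀ i ∈ u, Squarefree (n i))
    (hsum : ∑ i ∈ u, (g i : ℝ) * Real.sqrt (n i) = 0)
    (P : ℕ → Prop) [DecidablePred P] :
    ∑ i ∈ u.filter (fun i => P (n i)), (g i : ℝ) * Real.sqrt (n i) = 0 := by
  have key : ∀ m ∈ u.image n, (∑ i ∈ u.filter (fun i => n i = m), g i) = 0 := by
    refine sqrt_squarefree_linIndep (u.image n) ?_ _ ?_
    · rintro d hd
      obtain ⟨i, hi, rfl⟩ := Finset.mem_image.mp hd
      exact hn i hi
    · rw [← sum_fiber_sqrt]; exact hsum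
  rw [sum_fiber_sqrt]
  refine Finset.sum_eq_zero fun m hm => ?_
  obtain ⟨i, hi, rfl⟩ := Finset.mem_image.mp hm
  have hP : P (n i) := (Finset.mem_filter.mp hi).2
  have : (u.filter (fun j => P (n j))).filter (fun j => n j = n i) = u.filter (fun j => n j = n i) := by
    ext j
    simp only [Finset.mem_filter]
    constructor
    · rintro ⟨⟨hj, _⟩, he⟩; exact ⟨hj, he⟩
    · rintro ⟨hj, he⟩; exact ⟨⟨hj, he ▸ hP⟩, he⟩
  rw [this, key (n i) (Finset.mem_image_of_mem n (Finset.mem_filter.mp hi).1), Rat.cast_zero,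
    zero_mul]

noncomputable def sfPart (m : ℕ) : ℕ := (Nat.sq_mul_squarefree m).choose

noncomputable def rtPart (m : ℕ) : ℕ := (Nat.sq_mul_squarefree m).choose_spec.choose

private lemma rt_sf_spec (m : ℕ) : (rtPart m) ^ 2 * sfPart m = m ∧ Squarefree (sfPart m) :=
  (Nat.sq_mul_squarefree m).choose_spec.choose_spec

private lemma sf_squarefree (m : ℕ) : Squarefree (sfPart m) := (rt_sf_spec m).2

private lemma rt_sq_mul (m : ℕ) : (rtPart m) ^ 2 * sfPart m = m := (rt_sf_spec m).1

private lemma sqrt_eq_rt_mul_sqrt_sf (m : ℕ) :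
    Real.sqrt m = (rtPart m : ℝ) * Real.sqrt (sfPart m) := by
  conv_lhs => rw [← rt_sq_mul m]
  push_cast
  rw [Real.sqrt_mul (by positivity), Real.sqrt_sq (by positivity)]

private lemma prime_dvd_sf {p m : ℕ} (hp : p.Prime) (hdvd : p ∣ m) (h2 : ¬ p ^ 2 ∣ m) :
    p ∣ sfPart m := by
  have hm := rt_sq_mul m
  rcases (Nat.Prime.dvd_mul hp).mp (hm ▸ hdvd) with h | h
  · exfalso
    have : p ∣ rtPart m := by
      rcases (Nat.Prime.dvd_mul hp).mp (by rwa [sq] at h) with h' | h' <;> exact h'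
    exact h2 (dvd_trans (pow_dvd_pow_of_dvd this 2) (Dvd.intro _ hm))
  · exact h

private lemma prime_not_dvd_sf {p m : ℕ} (hdvd : ¬ p ∣ m) : ¬ p ∣ sfPart m := by
  intro hc
  exact hdvd (dvd_trans hc (Dvd.intro_left _ (rt_sq_mul m)))

private lemma main_induction (M : ℕ) : ∀ (a b : Fin M → ℕ),
    (∀ i, Nat.Prime (a i + b i + 1)) →
    (∀ i j : Fin M, i ≤ j → a j + b j ≤ a i + b i) →
    (∀ i j k : Fin M, a j + b k + 1 = a i + b i + 1 → i = j ∧ j = k) →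
    ∀ t : Equiv.Perm (Fin M) → ℝ, (∀ σ, t σ = -1 ∨ t σ = 1) →
    ∑ σ : Equiv.Perm (Fin M), t σ * Real.sqrt ((∏ i, (a (σ i) + b i + 1) : ℕ) : ℝ) ≠ 0 := by
  induction M with
  | zero =>
    intro a b _ _ _ t ht hsum
    rw [Fintype.sum_eq_single (1 : Equiv.Perm (Fin 0))
      (fun σ hσ => absurd (Equiv.ext fun i => i.elim0) hσ)] at hsum
    simp only [Finset.univ_eq_empty, Finset.prod_empty, Nat.cast_one, Real.sqrt_one,
      mul_one] at hsum
    rcases ht 1 with h | h <;> rw [h] at hsum <;> norm_num at hsum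
  | succ M IH =>
    intro a b hp hdec h t ht hsum
    set p : ℕ := a 0 + b 0 + 1 with hpdef
    have hppr : p.Prime := hp 0
    have hppos : 0 < p := hppr.pos
    -- p divides an entry iff it is the (0,0) entry
    have f1 : ∀ j k : Fin (M + 1), p ∣ (a j + b k + 1) → j = 0 ∧ k = 0 := by
      intro j k hd
      have hj := hdec 0 j (Fin.zero_le j)
      have hk := hdec 0 k (Fin.zero_le k)
      have hlt : a j + b k + 1 < 2 * p := by omega
      obtain ⟨q, hq⟩ := hd
      have hq1 : q = 1 := by
        rcases Nat.lt_or_ge q 2 with h2 | h2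
        · interval_cases q
          · omega
          · rfl
        · exfalso
          have : p * 2 ≤ p * q := Nat.mul_le_mul_left p h2
          omega
      rw [hq1, mul_one] at hq
      obtain ⟨h1, h2⟩ := h 0 j k hq
      exact ⟨h1.symm, h2.symm.trans h1.symm⟩
    set N : Equiv.Perm (Fin (M + 1)) → ℕ := fun σ => ∏ i, (a (σ i) + b i + 1) with hN
    have hNpos : ∀ σ, 0 < N σ := fun σ => Finset.prod_pos fun i _ => by omega
    have hpdvdN : ∀ σ : Equiv.Perm (Fin (M + 1)), p ∣ N σ ↔ σ 0 = 0 := by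
      intro σ
      constructor
      · intro hd
        obtain ⟨i, _, hi⟩ := hppr.prime.exists_mem_finset_dvd hd
        obtain ⟨h1, h2⟩ := f1 (σ i) i hi
        exact h2 ▸ h1
      · intro h0
        have : N σ = (a (σ 0) + b 0 + 1) * ∏ i : Fin M, (a (σ i.succ) + b i.succ + 1) :=
          Fin.prod_univ_succ _
        rw [this, h0]
        exact dvd_mul_right p _
    have hp2 : ∀ σ : Equiv.Perm (Fin (M + 1)), σ 0 = 0 → ¬ p ^ 2 ∣ N σ := by
      intro σ h0 hc
      have hsplit : N σ = p * ∏ i : Fin M, (a (σ i.succ) + b i.succ + 1) := by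
        have h1 : N σ = (a (σ 0) + b 0 + 1) * ∏ i : Fin M, (a (σ i.succ) + b i.succ + 1) :=
          Fin.prod_univ_succ _
        rw [h1, h0, hpdef]
      have hdd : p ∣ ∏ i : Fin M, (a (σ i.succ) + b i.succ + 1) := by
        rw [hsplit, sq] at hc
        exact (Nat.mul_dvd_mul_iff_left hppos).mp hc
      obtain ⟨i, _, hi⟩ := hppr.prime.exists_mem_finset_dvd hdd
      exact (Fin.succ_ne_zero i) (f1 _ _ hi).2
    have hpsf : ∀ σ : Equiv.Perm (Fin (M + 1)), p ∣ sfPart (N σ) ↔ σ 0 = 0 := by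
      intro σ
      constructor
      · intro hd
        exact (hpdvdN σ).mp (hd.trans (Dvd.intro_left _ (rt_sq_mul _)))
      · intro h0
        exact prime_dvd_sf hppr ((hpdvdN σ).mpr h0) (hp2 σ h0)
    -- rational coefficients
    set tq : Equiv.Perm (Fin (M + 1)) → ℚ := fun σ => if t σ = 1 then 1 else -1 with htqdef
    have htq : ∀ σ, ((tq σ : ℚ) : ℝ) = t σ := by
      intro σ
      rcases ht σ with h1 | h1
      · rw [htqdef]
        simp only [h1]
        norm_num
      · rw [htqdef]
        simp [h1]
    set g : Equiv.Perm (Fin (M + 1)) → ℚ := fun σ => tq σ * (rtPart (N σ) : ℚ) with hgdef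
    have hterm : ∀ σ, (g σ : ℝ) * Real.sqrt (sfPart (N σ)) = t σ * Real.sqrt (N σ) := by
      intro σ
      rw [sqrt_eq_rt_mul_sqrt_sf (N σ), hgdef]
      push_cast
      rw [htq]
      ring
    have hsum2 : ∑ σ : Equiv.Perm (Fin (M + 1)), (g σ : ℝ) * Real.sqrt (sfPart (N σ)) = 0 := by
      rw [← hsum]
      exact Finset.sum_congr rfl fun σ _ => hterm σ
    have hfil := sqrt_filter_eq_zero Finset.univ g (fun σ => sfPart (N σ))
      (fun σ _ => sf_squarefree _) hsum2 (fun m => p ∣ m)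
    have hfilset : Finset.univ.filter (fun σ : Equiv.Perm (Fin (M + 1)) => p ∣ sfPart (N σ))
        = Finset.univ.filter (fun σ => σ 0 = 0) :=
      Finset.filter_congr fun σ _ => by rw [hpsf σ]
    rw [hfilset] at hfil
    have hfil2 : ∑ σ ∈ Finset.univ.filter (fun σ : Equiv.Perm (Fin (M + 1)) => σ 0 = 0),
        t σ * Real.sqrt (N σ) = 0 := by
      rw [← hfil]
      exact Finset.sum_congr rfl fun σ _ => (hterm σ).symm
    -- bijection with Perm (Fin M)
    set D : Equiv.Perm (Fin M) → Equiv.Perm (Fin (M + 1)) :=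
      fun e => Equiv.Perm.decomposeFin.symm (0, e) with hDdef
    have hD0 : ∀ e, D e 0 = 0 := fun e => Equiv.Perm.decomposeFin_symm_apply_zero 0 e
    have hDsucc : ∀ e (i : Fin M), D e i.succ = (e i).succ := by
      intro e i
      rw [hDdef]
      rw [Equiv.Perm.decomposeFin_symm_apply_succ, Equiv.swap_self, Equiv.refl_apply]
    have hDinv : ∀ σ : Equiv.Perm (Fin (M + 1)), σ 0 = 0 →
        D ((Equiv.Perm.decomposeFin σ).2) = σ := by
      intro σ h0
      have h1 := Equiv.Perm.decomposeFin_symm_apply_zero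
        (Equiv.Perm.decomposeFin σ).1 (Equiv.Perm.decomposeFin σ).2
      rw [Prod.mk.eta, Equiv.symm_apply_apply] at h1
      have hfst : (Equiv.Perm.decomposeFin σ).1 = 0 := h1.symm.trans h0
      have hpair : ((0 : Fin (M + 1)), (Equiv.Perm.decomposeFin σ).2)
          = Equiv.Perm.decomposeFin σ := by
        rw [← hfst]
      show Equiv.Perm.decomposeFin.symm (0, (Equiv.Perm.decomposeFin σ).2) = σ
      rw [hpair, Equiv.symm_apply_apply]
    have hbij : ∑ e : Equiv.Perm (Fin M), t (D e) * Real.sqrt (N (D e))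
        = ∑ σ ∈ Finset.univ.filter (fun σ : Equiv.Perm (Fin (M + 1)) => σ 0 = 0),
          t σ * Real.sqrt (N σ) := by
      refine Finset.sum_bij (fun e _ => D e) ?_ ?_ ?_ (fun e _ => rfl)
      · intro e _
        simp only [Finset.mem_filter, Finset.mem_univ, true_and]
        exact hD0 e
      · intro e1 _ e2 _ heq
        have := congrArg Equiv.Perm.decomposeFin heq
        simp only [hDdef, Equiv.apply_symm_apply, Prod.mk.injEq] at this
        exact this.2
      · intro σ hσ
        exact ⟨(Equiv.Perm.decomposeFin σ).2, Finset.mem_univ _,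
          hDinv σ (Finset.mem_filter.mp hσ).2⟩
    have hND : ∀ e : Equiv.Perm (Fin M),
        N (D e) = p * ∏ i : Fin M, (a ((e i).succ) + b i.succ + 1) := by
      intro e
      have h1 : N (D e) = (a (D e 0) + b 0 + 1) * ∏ i : Fin M, (a (D e i.succ) + b i.succ + 1) :=
        Fin.prod_univ_succ _
      rw [h1, hD0 e, hpdef]
      exact congrArg _ (Finset.prod_congr rfl fun i _ => by rw [hDsucc e i])
    have hPp : ∑ e : Equiv.Perm (Fin M), t (D e) * Real.sqrt (N (D e))
        = Real.sqrt p * ∑ e : Equiv.Perm (Fin M),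
          t (D e) * Real.sqrt ((∏ i : Fin M, (a ((e i).succ) + b i.succ + 1) : ℕ) : ℝ) := by
      rw [Finset.mul_sum]
      refine Finset.sum_congr rfl fun e _ => ?_
      rw [hND e]
      push_cast
      rw [Real.sqrt_mul (by positivity)]
      ring
    have hsqp : Real.sqrt p * ∑ e : Equiv.Perm (Fin M),
        t (D e) * Real.sqrt ((∏ i : Fin M, (a ((e i).succ) + b i.succ + 1) : ℕ) : ℝ) = 0 := by
      rw [← hPp, hbij]
      exact hfil2
    have hsp : Real.sqrt p ≠ 0 := by
      refine Real.sqrt_ne_zero'.mpr ?_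
      exact_mod_cast hppos
    have hinner : ∑ e : Equiv.Perm (Fin M),
        t (D e) * Real.sqrt ((∏ i : Fin M, (a ((e i).succ) + b i.succ + 1) : ℕ) : ℝ) = 0 :=
      (mul_eq_zero.mp hsqp).resolve_left hsp
    exact IH (fun i => a i.succ) (fun i => b i.succ) (fun i => hp i.succ)
      (fun i j hij => hdec i.succ j.succ (Fin.succ_le_succ_iff.mpr hij))
      (fun i j k heq => by
        obtain ⟨h1, h2⟩ := h i.succ j.succ k.succ heq
        exact ⟨Fin.succ_injective _ h1, Fin.succ_injective _ h2⟩)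
      (fun e => t (D e)) (fun e => ht (D e)) hinner

/-- if p_i := a_i + b_i + 1 are primes with p_0 < … < p_{M−1} and
a_j + b_k + 1 = p_i only when i = j = k, then for any choice of signs s(i,j) ∈ {−1, +1},
the M×M matrix with entries s(i,j)·√(a_i + b_j + 1) has rank M over ℝ; equivalently its
determinant is nonzero. -/
theorem stmt_8 (M : ℕ) (hM : 1 ≤ M) (a b : Fin M → ℕ)
    (hp : ∀ i, Nat.Prime (a i + b i + 1))
    (hmono : StrictMono fun i => a i + b i + 1)
    (h : ∀ i j k : Fin M, a j + b k + 1 = a i + b i + 1 → i = j ∧ j = k)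
    (s : Fin M → Fin M → ℝ) (hs : ∀ i j, s i j = -1 ∨ s i j = 1) :
    (Matrix.of fun i j : Fin M => s i j * Real.sqrt ((a i + b j + 1 : ℕ) : ℝ)).rank = M ∧
    (Matrix.of fun i j : Fin M => s i j * Real.sqrt ((a i + b j + 1 : ℕ) : ℝ)).det ≠ 0 := by
  classical
  set A : Matrix (Fin M) (Fin M) ℝ :=
    Matrix.of fun i j : Fin M => s i j * Real.sqrt ((a i + b j + 1 : ℕ) : ℝ) with hA
  -- the determinant as a signed sum over permutations
  have hdet : A.det = ∑ σ : Equiv.Perm (Fin M),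
      (((Equiv.Perm.sign σ : ℤ) : ℝ) * ∏ i, s (σ i) i)
        * Real.sqrt ((∏ i, (a (σ i) + b i + 1) : ℕ) : ℝ) := by
    rw [Matrix.det_apply]
    refine Finset.sum_congr rfl fun σ _ => ?_
    have h1 : ∀ i : Fin M, A (σ i) i = s (σ i) i * Real.sqrt ((a (σ i) + b i + 1 : ℕ) : ℝ) :=
      fun i => rfl
    rw [Finset.prod_congr rfl fun i _ => h1 i, Finset.prod_mul_distrib, ← sqrt_nat_prod]
    rw [Units.smul_def, zsmul_eq_mul]
    ring
  have hsign : ∀ σ : Equiv.Perm (Fin M),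
      ((Equiv.Perm.sign σ : ℤ) : ℝ) * ∏ i, s (σ i) i = -1 ∨
      ((Equiv.Perm.sign σ : ℤ) : ℝ) * ∏ i, s (σ i) i = 1 := by
    intro σ
    have h1 : (∏ i, s (σ i) i) = 1 ∨ (∏ i, s (σ i) i) = -1 := by
      refine Finset.prod_induction _ (fun x => x = 1 ∨ x = -1) ?_ (Or.inl rfl) ?_
      · rintro x y (rfl | rfl) (rfl | rfl) <;> norm_num
      · intro i _
        rcases hs (σ i) i with h2 | h2
        · exact Or.inr h2
        · exact Or.inl h2
    have h2 : ((Equiv.Perm.sign σ : ℤ) : ℝ) = 1 ∨ ((Equiv.Perm.sign σ : ℤ) : ℝ) = -1 := by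
      rcases Int.units_eq_one_or (Equiv.Perm.sign σ) with h3 | h3 <;> rw [h3] <;> norm_num
    rcases h1 with h1 | h1 <;> rcases h2 with h2 | h2 <;> rw [h1, h2] <;> norm_num
  have hdetne : A.det ≠ 0 := by
    intro hzero
    have hconj : ∀ τ : Equiv.Perm (Fin M), ∀ i : Fin M,
        (Fin.revPerm * τ * Fin.revPerm : Equiv.Perm (Fin M)) i = (τ i.rev).rev := by
      intro τ i
      rfl
    have hsum' : ∑ τ : Equiv.Perm (Fin M),
        (((Equiv.Perm.sign (Fin.revPerm * τ * Fin.revPerm : Equiv.Perm (Fin M)) : ℤ) : ℝ)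
            * ∏ i, s ((Fin.revPerm * τ * Fin.revPerm : Equiv.Perm (Fin M)) i) i)
          * Real.sqrt ((∏ i, (a (τ i).rev + b i.rev + 1) : ℕ) : ℝ) = 0 := by
      rw [← hzero, hdet]
      refine Fintype.sum_equiv ((Equiv.mulRight Fin.revPerm).trans (Equiv.mulLeft Fin.revPerm))
        _ _ fun τ => ?_
      have hmem : ((Equiv.mulRight Fin.revPerm).trans (Equiv.mulLeft Fin.revPerm)) τ
          = (Fin.revPerm * τ * Fin.revPerm : Equiv.Perm (Fin M)) := by
        simp [mul_assoc]
      rw [hmem]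
      have hradeq : (∏ i, (a (τ i).rev + b i.rev + 1))
          = ∏ i, (a ((Fin.revPerm * τ * Fin.revPerm : Equiv.Perm (Fin M)) i) + b i + 1) :=
        calc (∏ i, (a (τ i).rev + b i.rev + 1))
            = ∏ i, (a (τ (Fin.revPerm i).rev).rev + b (Fin.revPerm i) + 1) := by
              refine Finset.prod_congr rfl fun i _ => ?_
              show a (τ i).rev + b i.rev + 1 = a (τ i.rev.rev).rev + b i.rev + 1
              rw [Fin.rev_rev]
          _ = ∏ i, (a (τ i.rev).rev + b i + 1) :=
              Equiv.prod_comp Fin.revPerm (fun i => a (τ i.rev).rev + b i + 1)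
          _ = ∏ i, (a ((Fin.revPerm * τ * Fin.revPerm : Equiv.Perm (Fin M)) i) + b i + 1) :=
              Finset.prod_congr rfl fun i _ => by rw [hconj τ i]
      rw [hradeq]
    exact main_induction M (fun i => a i.rev) (fun i => b i.rev)
      (fun i => hp i.rev)
      (fun i j hij => by
        have := hmono.monotone (Fin.rev_le_rev.mpr hij)
        simpa using this)
      (fun i j k heq => by
        obtain ⟨h1, h2⟩ := h i.rev j.rev k.rev heq
        exact ⟨Fin.rev_inj.mp h1, Fin.rev_inj.mp h2⟩)
      (fun τ => (((Equiv.Perm.sign (Fin.revPerm * τ * Fin.revPerm : Equiv.Perm (Fin M)) : ℤ) : ℝ)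
        * ∏ i, s ((Fin.revPerm * τ * Fin.revPerm : Equiv.Perm (Fin M)) i) i))
      (fun τ => hsign _) hsum'
  refine ⟨?_, hdetne⟩
  have hu : IsUnit A := (Matrix.isUnit_iff_isUnit_det A).mpr (isUnit_iff_ne_zero.mpr hdetne)
  rw [Matrix.rank_of_isUnit A hu, Fintype.card_fin]
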